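/- Let f₁,…,f_k be homeomorphisms of the n-sphere Sⁿ (n ≥ 1) generating an IFS which is backward minimal and which contains a 'north–south' homeomorphism ϕ in the generated semigroup, with attracting fixed point p and repelling fixed point q (convergence ϕ^ℓ → p uniform on complements of neighborhoods of q). Let ℙ be the Bernoulli measure on Σ = {1,…,k}^ℕ with strictly positive weights. Then the IFS is proximal in a strong way: for every x, y ∈ Sⁿ, for ℙ-almost every ω ∈ Σ, liminf_{i→∞} d(f^i_ω(x), f^i_ω(y)) = 0. -/

import Mathlib

open MeasureTheory Metric
open scoped ENNReal Classical

/-- Apply the maps of an IFS along a finite word: `f_{w_n} ∘ ⋯ ∘ f_{w_1}`. -/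
def applyWord {X : Type*} {k : ℕ} (f : Fin k → X → X) (w : List (Fin k)) (x : X) : X :=
  w.foldl (fun y i => f i y) x

/-- Apply the inverses of the IFS generators along a finite word. -/
def applyInvWord {X : Type*} [TopologicalSpace X] {k : ℕ} (f : Fin k → X ≃ₜ X)
    (w : List (Fin k)) (x : X) : X :=
  w.foldl (fun y i => (f i).symm y) x

/-- The fiberwise iterate `f^n_ω(x) = f_{ω_n} ∘ ⋯ ∘ f_{ω_1}(x)` (0-indexed `ω`). -/
def fIter {X : Type*} {k : ℕ} (f : Fin k → X → X) (ω : ℕ → Fin k) (x : X) : ℕ → X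
  | 0 => x
  | n + 1 => f (ω n) (fIter f ω x n)

section basic
variable {X : Type*} {k : ℕ}

lemma applyWord_nil (f : Fin k → X → X) (x : X) : applyWord f [] x = x := rfl

lemma applyWord_cons (f : Fin k → X → X) (i : Fin k) (w : List (Fin k)) (x : X) :
    applyWord f (i :: w) x = applyWord f w (f i x) := rfl

lemma applyWord_append (f : Fin k → X → X) (u v : List (Fin k)) (x : X) :
    applyWord f (u ++ v) x = applyWord f v (applyWord f u x) := by
  simp [applyWord, List.foldl_append]


lemma fIter_add (f : Fin k → X → X) (ω : ℕ → Fin k) (x : X) (t m : ℕ) :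
    fIter f ω x (t + m) = applyWord f (List.ofFn (fun i : Fin m => ω (t + i))) (fIter f ω x t) := by
  induction m with
  | zero => rfl
  | succ m ih =>
    show f (ω (t+m)) (fIter f ω x (t+m)) = _
    rw [ih, List.ofFn_succ', List.concat_eq_append, applyWord_append]
    simp only [Fin.coe_castSucc, Fin.val_last]
    rfl

lemma fIter_congr (f : Fin k → X → X) (ω ω' : ℕ → Fin k) (x : X) (t : ℕ)
    (h : ∀ i < t, ω i = ω' i) : fIter f ω x t = fIter f ω' x t := by
  induction t with
  | zero => rfl
  | succ t ih =>
    show f (ω t) _ = f (ω' t) _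
    rw [h t (Nat.lt_succ_self t), ih (fun i hi => h i (hi.trans (Nat.lt_succ_self t)))]

end basic

section homeo
variable {X : Type*} [TopologicalSpace X] {k : ℕ}

lemma applyWord_injective (f : Fin k → X ≃ₜ X) (w : List (Fin k)) :
    Function.Injective (applyWord (fun i => ⇑(f i)) w) := by
  induction w with
  | nil => exact fun a b h => h
  | cons i w ih =>
    intro a b h
    rw [applyWord_cons, applyWord_cons] at h
    exact (f i).injective (ih h)

lemma applyWord_reverse_applyInvWord (f : Fin k → X ≃ₜ X) (w : List (Fin k)) (x : X) :
    applyWord (fun i => ⇑(f i)) w.reverse (applyInvWord f w x) = x := by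
  induction w generalizing x with
  | nil => rfl
  | cons i w ih =>
    rw [List.reverse_cons, show applyInvWord f (i :: w) x = applyInvWord f w ((f i).symm x) from rfl,
      applyWord_append, ih]
    show (f i) ((f i).symm x) = x
    simp

lemma continuous_applyWord (f : Fin k → X ≃ₜ X) (w : List (Fin k)) :
    Continuous (applyWord (fun i => ⇑(f i)) w) := by
  induction w with
  | nil => exact continuous_id
  | cons i w ih => exact ih.comp (f i).continuous

end homeo

section geom
variable {X : Type*} [MetricSpace X] {k : ℕ} (f : Fin k → X ≃ₜ X)

lemma star_lemma (q : X)
    (hdq : Dense {y | ∃ w : List (Fin k), w ≠ [] ∧ y = applyInvWord f w q})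
    (hthird : ∀ a b : X, ∃ z, z ≠ a ∧ z ≠ b) (a b : X) :
    ∃ u : List (Fin k),
      applyWord (fun i => ⇑(f i)) u a ≠ q ∧ applyWord (fun i => ⇑(f i)) u b ≠ q := by
  by_contra hcon
  push_neg at hcon
  have hsub : {y | ∃ w : List (Fin k), w ≠ [] ∧ y = applyInvWord f w q} ⊆ {a, b} := by
    rintro y ⟨w, hw, rfl⟩
    have key := applyWord_reverse_applyInvWord f w q
    rcases eq_or_ne (applyWord (fun i => ⇑(f i)) w.reverse a) q with h1|h1
    · left
      exact applyWord_injective f w.reverse (key.trans h1.symm)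
    · right
      exact applyWord_injective f w.reverse (key.trans (hcon _ h1).symm)
  obtain ⟨z, hza, hzb⟩ := hthird a b
  have hz : z ∈ closure {y | ∃ w : List (Fin k), w ≠ [] ∧ y = applyInvWord f w q} :=
    hdq.closure_eq ▸ Set.mem_univ z
  have : z ∈ ({a, b} : Set X) := by
    have hcl : closure {y | ∃ w : List (Fin k), w ≠ [] ∧ y = applyInvWord f w q}
        ⊆ ({a, b} : Set X) := by
      have hfin : ({a, b} : Set X).Finite := (Set.finite_singleton b).insert a
      rw [← hfin.isClosed.closure_eq]
      exact closure_mono hsub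
    exact hcl hz
  rcases this with h|h
  · exact hza h
  · exact hzb (by simpa using h)

lemma pointwise_tendsto (ϕ : X ≃ₜ X) (p q : X)
    (huniform : ∀ W : Set X, IsOpen W → q ∈ W →
      TendstoUniformlyOn (fun ℓ x => (⇑ϕ)^[ℓ] x) (fun _ => p) Filter.atTop Wᶜ)
    (z : X) (hz : z ≠ q) :
    Filter.Tendsto (fun m => (⇑ϕ)^[m] z) Filter.atTop (nhds p) := by
  have hpos : 0 < dist z q := dist_pos.2 hz
  have := huniform (ball q (dist z q)) isOpen_ball (mem_ball_self hpos)
  exact this.tendsto_at (by simp [mem_ball])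

lemma phi_word (ϕ : X ≃ₜ X) (w0 : List (Fin k))
    (hw0 : ∀ x, ϕ x = applyWord (fun i => ⇑(f i)) w0 x) (m : ℕ) :
    ∃ v : List (Fin k), ∀ x, applyWord (fun i => ⇑(f i)) v x = (⇑ϕ)^[m] x := by
  induction m with
  | zero => exact ⟨[], fun x => rfl⟩
  | succ m ih =>
    obtain ⟨v, hv⟩ := ih
    refine ⟨v ++ w0, fun x => ?_⟩
    rw [applyWord_append, hv, ← hw0, Function.iterate_succ_apply']

lemma contraction_lemma (q : X)
    (hdq : Dense {y | ∃ w : List (Fin k), w ≠ [] ∧ y = applyInvWord f w q})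
    (hthird : ∀ a b : X, ∃ z, z ≠ a ∧ z ≠ b)
    (ϕ : X ≃ₜ X) (p : X)
    (huniform : ∀ W : Set X, IsOpen W → q ∈ W →
      TendstoUniformlyOn (fun ℓ x => (⇑ϕ)^[ℓ] x) (fun _ => p) Filter.atTop Wᶜ)
    (w0 : List (Fin k)) (hw0 : ∀ x, ϕ x = applyWord (fun i => ⇑(f i)) w0 x)
    {ε : ℝ} (hε : 0 < ε) (a b : X) :
    ∃ w : List (Fin k),
      dist (applyWord (fun i => ⇑(f i)) w a) (applyWord (fun i => ⇑(f i)) w b) < ε := by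
  obtain ⟨u, hua, hub⟩ := star_lemma f q hdq hthird a b
  set za := applyWord (fun i => ⇑(f i)) u a
  set zb := applyWord (fun i => ⇑(f i)) u b
  have ta := pointwise_tendsto ϕ p q huniform za hua
  have tb := pointwise_tendsto ϕ p q huniform zb hub
  have hball : ∀ᶠ m in Filter.atTop,
      dist ((⇑ϕ)^[m] za) p < ε/2 ∧ dist ((⇑ϕ)^[m] zb) p < ε/2 := by
    filter_upwards [ta.eventually (eventually_nhds_iff_ball.mpr
        ⟨ε/2, by linarith, fun z hz => hz⟩),
      tb.eventually (eventually_nhds_iff_ball.mpr ⟨ε/2, by linarith, fun z hz => hz⟩)]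
      with m h1 h2
    exact ⟨by simpa [mem_ball] using h1, by simpa [mem_ball] using h2⟩
  obtain ⟨m, hm⟩ := hball.exists
  obtain ⟨v, hv⟩ := phi_word f ϕ w0 hw0 m
  refine ⟨u ++ v, ?_⟩
  rw [applyWord_append, applyWord_append, hv, hv]
  calc dist ((⇑ϕ)^[m] za) ((⇑ϕ)^[m] zb)
      ≤ dist ((⇑ϕ)^[m] za) p + dist p ((⇑ϕ)^[m] zb) := dist_triangle _ _ _
    _ < ε/2 + ε/2 := by
        have := hm.2
        rw [dist_comm] at this
        exact add_lt_add hm.1 this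
    _ = ε := by ring

lemma uniform_contraction [CompactSpace X] (q : X)
    (hdq : Dense {y | ∃ w : List (Fin k), w ≠ [] ∧ y = applyInvWord f w q})
    (hthird : ∀ a b : X, ∃ z, z ≠ a ∧ z ≠ b)
    (ϕ : X ≃ₜ X) (p : X)
    (huniform : ∀ W : Set X, IsOpen W → q ∈ W →
      TendstoUniformlyOn (fun ℓ x => (⇑ϕ)^[ℓ] x) (fun _ => p) Filter.atTop Wᶜ)
    (w0 : List (Fin k)) (hw0 : ∀ x, ϕ x = applyWord (fun i => ⇑(f i)) w0 x)
    {ε : ℝ} (hε : 0 < ε) :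
    ∃ N : ℕ, ∀ a b : X, ∃ w : List (Fin k), w.length ≤ N ∧
      dist (applyWord (fun i => ⇑(f i)) w a) (applyWord (fun i => ⇑(f i)) w b) < ε := by
  set U : List (Fin k) → Set (X × X) := fun w =>
    {z | dist (applyWord (fun i => ⇑(f i)) w z.1) (applyWord (fun i => ⇑(f i)) w z.2) < ε}
  have hUopen : ∀ w, IsOpen (U w) := by
    intro w
    have hc : Continuous (fun z : X × X =>
        dist (applyWord (fun i => ⇑(f i)) w z.1) (applyWord (fun i => ⇑(f i)) w z.2)) :=
      Continuous.dist ((continuous_applyWord f w).comp continuous_fst)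
        ((continuous_applyWord f w).comp continuous_snd)
    exact isOpen_lt hc continuous_const
  have hcover : (Set.univ : Set (X × X)) ⊆ ⋃ w, U w := by
    intro z _
    obtain ⟨w, hw⟩ := contraction_lemma f q hdq hthird ϕ p huniform w0 hw0 hε z.1 z.2
    exact Set.mem_iUnion.mpr ⟨w, hw⟩
  obtain ⟨t, ht⟩ := isCompact_univ.elim_finite_subcover U hUopen hcover
  refine ⟨t.sup List.length, fun a b => ?_⟩
  have : (a, b) ∈ ⋃ w ∈ t, U w := ht (Set.mem_univ _)
  obtain ⟨w, hwt, hw⟩ := Set.mem_iUnion₂.mp this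
  exact ⟨w, Finset.le_sup hwt, hw⟩

end geom

def splitEquiv (m N k : ℕ) : (Fin (m + N) → Fin k) ≃ ((Fin m → Fin k) × (Fin N → Fin k)) where
  toFun u := (fun i => u (Fin.castAdd N i), fun j => u (Fin.natAdd m j))
  invFun vc := fun i => Fin.addCases (motive := fun _ => Fin k) vc.1 vc.2 i
  left_inv u := funext fun i => by
    refine Fin.addCases (fun j => ?_) (fun j => ?_) i <;> simp
  right_inv vc := by
    ext i <;> simp

lemma splitEquiv_symm_castAdd {m N k : ℕ} (v : Fin m → Fin k) (c : Fin N → Fin k) (i : Fin m) :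
    (splitEquiv m N k).symm (v, c) (Fin.castAdd N i) = v i := by simp [splitEquiv]

lemma splitEquiv_symm_natAdd {m N k : ℕ} (v : Fin m → Fin k) (c : Fin N → Fin k) (j : Fin N) :
    (splitEquiv m N k).symm (v, c) (Fin.natAdd m j) = c j := by simp [splitEquiv]

section sums
variable {k : ℕ} (pw : Fin k → ℝ≥0∞)

lemma sum_all (hsum : ∑ i, pw i = 1) (m : ℕ) : ∑ u : Fin m → Fin k, ∏ i, pw (u i) = 1 := by
  have h1 : ∑ u ∈ Fintype.piFinset (fun _ : Fin m => (Finset.univ : Finset (Fin k))),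
      ∏ i, pw (u i) = ∏ _i : Fin m, ∑ j, pw j := (Finset.prod_univ_sum _ _).symm
  rw [Fintype.piFinset_univ] at h1
  rw [h1, hsum]
  simp

lemma wt_split {m N : ℕ} (v : Fin m → Fin k) (c : Fin N → Fin k) :
    ∏ i, pw ((splitEquiv m N k).symm (v, c) i) = (∏ i, pw (v i)) * ∏ j, pw (c j) := by
  rw [Fin.prod_univ_add]
  congr 1
  · exact Finset.prod_congr rfl fun i _ => by rw [splitEquiv_symm_castAdd]
  · exact Finset.prod_congr rfl fun j _ => by rw [splitEquiv_symm_natAdd]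

lemma sum_match (hsum : ∑ i, pw i = 1) {N : ℕ} (w : List (Fin k)) (hL : w.length ≤ N) :
    ∑ b : Fin N → Fin k,
      (if (∀ i : Fin w.length, b (Fin.castLE hL i) = w.get i) then ∏ i, pw (b i) else 0)
      = ∏ i : Fin w.length, pw (w.get i) := by
  obtain ⟨R, rfl⟩ : ∃ R, N = w.length + R := ⟨N - w.length, (Nat.add_sub_cancel' hL).symm⟩
  rw [← Equiv.sum_comp (splitEquiv w.length R k).symm]
  rw [Fintype.sum_prod_type]
  have hcast : ∀ i : Fin w.length, Fin.castLE hL i = Fin.castAdd R i := fun i => rfl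
  have step : ∀ v : Fin w.length → Fin k, ∀ c : Fin R → Fin k,
      (if (∀ i : Fin w.length, (splitEquiv w.length R k).symm (v, c) (Fin.castLE hL i) = w.get i)
        then ∏ i, pw ((splitEquiv w.length R k).symm (v, c) i) else 0)
      = (if v = (fun i => w.get i) then (∏ i, pw (v i)) * ∏ j, pw (c j) else 0) := by
    intro v c
    rw [wt_split]
    congr 1
    simp only [hcast, splitEquiv_symm_castAdd]
    rw [eq_iff_iff, funext_iff]
  calc ∑ v : Fin w.length → Fin k, ∑ c : Fin R → Fin k,
        (if (∀ i : Fin w.length,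
            (splitEquiv w.length R k).symm (v, c) (Fin.castLE hL i) = w.get i)
          then ∏ i, pw ((splitEquiv w.length R k).symm (v, c) i) else 0)
      = ∑ v : Fin w.length → Fin k, ∑ c : Fin R → Fin k,
        (if v = (fun i => w.get i) then (∏ i, pw (v i)) * ∏ j, pw (c j) else 0) := by
        exact Finset.sum_congr rfl fun v _ => Finset.sum_congr rfl fun c _ => step v c
    _ = ∑ v : Fin w.length → Fin k,
        (if v = (fun i => w.get i) then (∏ i, pw (v i)) * ∑ c : Fin R → Fin k, ∏ j, pw (c j) else 0) := by
        refine Finset.sum_congr rfl fun v _ => ?_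
        split_ifs
        · rw [Finset.mul_sum]
        · simp
    _ = ∏ i : Fin w.length, pw (w.get i) := by
        rw [Finset.sum_ite_eq' Finset.univ (fun i => w.get i)
          (fun v => (∏ i, pw (v i)) * ∑ c : Fin R → Fin k, ∏ j, pw (c j))]
        rw [sum_all pw hsum, mul_one]
        simp
end sums

section meas
variable {k : ℕ} (μ : Measure (ℕ → Fin k)) (pw : Fin k → ℝ≥0∞)

lemma prefix_measure
    (hcyl : ∀ (m : ℕ) (w : Fin m → Fin k),
      μ {ω | ∀ i : Fin m, ω i = w i} = ∏ i, pw (w i))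
    (m : ℕ) (P : (Fin m → Fin k) → Prop) :
    μ {ω | P (fun i : Fin m => ω i)} = ∑ u : Fin m → Fin k, (if P u then ∏ i, pw (u i) else 0) := by
  classical
  have hset : {ω : ℕ → Fin k | P (fun i : Fin m => ω i)}
      = ⋃ u ∈ Finset.univ.filter P, {ω : ℕ → Fin k | ∀ i : Fin m, ω i = u i} := by
    ext ω
    simp only [Set.mem_setOf_eq, Set.mem_iUnion, Finset.mem_filter, Finset.mem_univ, true_and]
    constructor
    · intro h
      exact ⟨fun i => ω i, h, fun i => rfl⟩
    · rintro ⟨u, hu, hω⟩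
      have : (fun i : Fin m => ω (i : ℕ)) = u := funext hω
      rw [this]
      exact hu
  have hdisj : (↑(Finset.univ.filter P) : Set (Fin m → Fin k)).PairwiseDisjoint
      (fun u => {ω : ℕ → Fin k | ∀ i : Fin m, ω i = u i}) := by
    intro u _ v _ huv
    refine Set.disjoint_left.mpr fun ω hu hv => huv ?_
    exact funext fun i => (hu i).symm.trans (hv i)
  have hmeas : ∀ u ∈ Finset.univ.filter P,
      MeasurableSet {ω : ℕ → Fin k | ∀ i : Fin m, ω i = u i} := by
    intro u _
    have : {ω : ℕ → Fin k | ∀ i : Fin m, ω i = u i}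
        = ⋂ i : Fin m, (fun ω : ℕ → Fin k => ω (i : ℕ)) ⁻¹' {u i} := by
      ext ω; simp
    rw [this]
    exact MeasurableSet.iInter fun i =>
      (measurable_pi_apply (i : ℕ)) (measurableSet_singleton _)
  rw [hset, measure_biUnion_finset hdisj hmeas]
  rw [Finset.sum_filter]
  exact Finset.sum_congr rfl fun u _ => by rw [hcyl m u]

lemma cond_step
    (hcyl : ∀ (m : ℕ) (w : Fin m → Fin k),
      μ {ω | ∀ i : Fin m, ω i = w i} = ∏ i, pw (w i))
    (hsum : ∑ i, pw i = 1)
    (m N : ℕ) (P : (Fin m → Fin k) → Prop)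
    (Wd : (Fin m → Fin k) → List (Fin k)) (hWd : ∀ u, (Wd u).length ≤ N) :
    μ {ω | P (fun i : Fin m => ω i) ∧
        ¬ (∀ i : Fin (Wd (fun i : Fin m => ω i)).length,
            ω (m + i) = (Wd (fun i : Fin m => ω i)).get i)}
    ≤ (1 - (∏ j, pw j) ^ N) * μ {ω | P (fun i : Fin m => ω i)} := by
  classical
  set ρ : ℝ≥0∞ := (∏ j, pw j) ^ N with hρ
  -- the LHS set as a prefix event of length m + N
  obtain ⟨Q, hQ⟩ : ∃ Q' : (Fin (m + N) → Fin k) → Prop, Q' = (fun u =>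
      P (fun i => u (Fin.castAdd N i)) ∧
      ¬ (∀ i : Fin (Wd (fun i => u (Fin.castAdd N i))).length,
          u (Fin.natAdd m (Fin.castLE (hWd _) i)) = (Wd (fun i => u (Fin.castAdd N i))).get i)) :=
    ⟨_, rfl⟩
  have hseteq : {ω : ℕ → Fin k | P (fun i : Fin m => ω i) ∧
        ¬ (∀ i : Fin (Wd (fun i : Fin m => ω i)).length,
            ω (m + i) = (Wd (fun i : Fin m => ω i)).get i)}
      = {ω : ℕ → Fin k | Q (fun i : Fin (m + N) => ω i)} := by
    ext ω
    simp only [Set.mem_setOf_eq, hQ]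
    have h1 : (fun i : Fin m => (fun i : Fin (m+N) => ω (i : ℕ)) (Fin.castAdd N i))
        = fun i : Fin m => ω (i : ℕ) := rfl
    rw [h1]
    have h2 : ∀ i : Fin (Wd (fun i : Fin m => ω (i:ℕ))).length,
        (fun i : Fin (m+N) => ω (i : ℕ)) (Fin.natAdd m (Fin.castLE (hWd _) i)) = ω (m + i) := by
      intro i; rfl
    constructor
    · rintro ⟨hP, hnm⟩
      exact ⟨hP, fun hmm => hnm (fun i => hmm i)⟩
    · rintro ⟨hP, hnm⟩
      exact ⟨hP, fun hmm => hnm (fun i => hmm i)⟩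
  rw [hseteq, prefix_measure μ pw hcyl (m + N) Q, prefix_measure μ pw hcyl m P]
  -- reindex the big sum
  have hre : (∑ u : Fin (m+N) → Fin k, if Q u then ∏ i, pw (u i) else 0)
      = ∑ vc : (Fin m → Fin k) × (Fin N → Fin k),
        (if Q ((splitEquiv m N k).symm vc) then ∏ i, pw ((splitEquiv m N k).symm vc i) else 0) :=
    (Fintype.sum_equiv (splitEquiv m N k).symm
      (fun vc => if Q ((splitEquiv m N k).symm vc) then ∏ i, pw ((splitEquiv m N k).symm vc i) else 0)
      (fun u => if Q u then ∏ i, pw (u i) else 0) (fun vc => rfl)).symm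
  rw [hre, Fintype.sum_prod_type]
  -- pointwise rewrite of the summand
  have hfst : ∀ (v : Fin m → Fin k) (c : Fin N → Fin k),
      (fun i => (splitEquiv m N k).symm (v, c) (Fin.castAdd N i)) = v := by
    intro v c; exact funext fun i => splitEquiv_symm_castAdd v c i
  have step : ∀ (v : Fin m → Fin k) (c : Fin N → Fin k),
      (if Q ((splitEquiv m N k).symm (v, c)) then ∏ i, pw ((splitEquiv m N k).symm (v, c) i) else 0)
      = (if P v then 1 else 0) *
        ((if ¬ (∀ i : Fin (Wd v).length, c (Fin.castLE (hWd v) i) = (Wd v).get i)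
          then ∏ j, pw (c j) else 0) * ∏ i, pw (v i)) := by
    intro v c
    have hQv : Q ((splitEquiv m N k).symm (v, c)) ↔
        P v ∧ ¬ (∀ i : Fin (Wd v).length, c (Fin.castLE (hWd v) i) = (Wd v).get i) := by
      rw [hQ]
      simp only [hfst v c, splitEquiv_symm_natAdd]
      rw [hfst v c]
    rw [wt_split]
    by_cases h1' : P v
    · by_cases h2' : (∀ i : Fin (Wd v).length, c (Fin.castLE (hWd v) i) = (Wd v).get i)
      · rw [if_neg (by rw [hQv]; tauto), if_pos h1', if_neg (by tauto)]
        simp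
      · rw [if_pos (by rw [hQv]; tauto), if_pos h1', if_pos (by tauto)]
        ring
    · rw [if_neg (by rw [hQv]; tauto), if_neg h1']
      simp
  calc ∑ v : Fin m → Fin k, ∑ c : Fin N → Fin k,
        (if Q ((splitEquiv m N k).symm (v, c)) then ∏ i, pw ((splitEquiv m N k).symm (v, c) i) else 0)
      = ∑ v : Fin m → Fin k, (if P v then 1 else 0) *
          ((∑ c : Fin N → Fin k,
            (if ¬ (∀ i : Fin (Wd v).length, c (Fin.castLE (hWd v) i) = (Wd v).get i)
              then ∏ j, pw (c j) else 0)) * ∏ i, pw (v i)) := by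
        refine Finset.sum_congr rfl fun v _ => ?_
        rw [Finset.sum_mul, Finset.mul_sum]
        exact Finset.sum_congr rfl fun c _ => by rw [step v c]
    _ ≤ ∑ v : Fin m → Fin k, (if P v then 1 else 0) * ((1 - ρ) * ∏ i, pw (v i)) := by
        refine Finset.sum_le_sum fun v _ => ?_
        refine mul_le_mul_right (mul_le_mul_left ?_ _) _
        -- the non-matching sum is at most 1 - ρ
        have hall : (∑ c : Fin N → Fin k,
              (if (∀ i : Fin (Wd v).length, c (Fin.castLE (hWd v) i) = (Wd v).get i)
                then ∏ j, pw (c j) else 0))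
            + (∑ c : Fin N → Fin k,
              (if ¬ (∀ i : Fin (Wd v).length, c (Fin.castLE (hWd v) i) = (Wd v).get i)
                then ∏ j, pw (c j) else 0)) = 1 := by
          rw [← Finset.sum_add_distrib]
          rw [← sum_all pw hsum N]
          refine Finset.sum_congr rfl fun c _ => ?_
          by_cases h : (∀ i : Fin (Wd v).length, c (Fin.castLE (hWd v) i) = (Wd v).get i)
          · rw [if_pos h, if_neg (by tauto), add_zero]
          · rw [if_neg h, if_pos h, zero_add]
        have hmatch : ρ ≤ ∑ c : Fin N → Fin k,
            (if (∀ i : Fin (Wd v).length, c (Fin.castLE (hWd v) i) = (Wd v).get i)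
              then ∏ j, pw (c j) else 0) := by
          rw [sum_match pw hsum (Wd v) (hWd v)]
          -- ρ = (∏ j, pw j)^N ≤ ∏ over word letters
          have hle1 : (∏ j, pw j) ≤ 1 := by
            refine Finset.prod_le_one (fun i _ => zero_le) (fun i _ => ?_)
            rw [← hsum]
            exact Finset.single_le_sum (fun j _ => zero_le) (Finset.mem_univ i)
          have h1 : ρ ≤ (∏ j, pw j) ^ (Wd v).length := by
            rw [hρ]
            exact pow_le_pow_of_le_one (zero_le) hle1 (hWd v)
          refine h1.trans ?_
          have h2 : (∏ j, pw j) ^ (Wd v).length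
              = ∏ _i : Fin (Wd v).length, ∏ j, pw j := by
            rw [Finset.prod_const, Finset.card_univ, Fintype.card_fin]
          rw [h2]
          refine Finset.prod_le_prod' fun i _ => ?_
          rw [← Finset.mul_prod_erase Finset.univ pw (Finset.mem_univ ((Wd v).get i))]
          exact mul_le_of_le_one_right' (Finset.prod_le_one (fun _ _ => zero_le)
            (fun j _ => by rw [← hsum]; exact Finset.single_le_sum (fun j _ => zero_le) (Finset.mem_univ j)))
        calc (∑ c : Fin N → Fin k,
              (if ¬ (∀ i : Fin (Wd v).length, c (Fin.castLE (hWd v) i) = (Wd v).get i)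
                then ∏ j, pw (c j) else 0))
            = 1 - (∑ c : Fin N → Fin k,
              (if (∀ i : Fin (Wd v).length, c (Fin.castLE (hWd v) i) = (Wd v).get i)
                then ∏ j, pw (c j) else 0)) := by
              have hfin : (∑ c : Fin N → Fin k,
                  (if (∀ i : Fin (Wd v).length, c (Fin.castLE (hWd v) i) = (Wd v).get i)
                    then ∏ j, pw (c j) else 0)) ≤ 1 := by
                rw [← hall]; exact le_self_add
              exact ENNReal.eq_sub_of_add_eq (ne_top_of_le_ne_top ENNReal.one_ne_top hfin)
                (by rw [add_comm]; exact hall)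
          _ ≤ 1 - ρ := tsub_le_tsub_left hmatch 1
    _ = (1 - ρ) * ∑ v : Fin m → Fin k, (if P v then ∏ i, pw (v i) else 0) := by
        rw [Finset.mul_sum]
        refine Finset.sum_congr rfl fun v _ => ?_
        by_cases h : P v
        · rw [if_pos h, if_pos h, one_mul]
        · rw [if_neg h, if_neg h, zero_mul, mul_zero]
end meas

lemma third_point {n : ℕ} (hn : 1 ≤ n) (a b : (sphere (0 : EuclideanSpace ℝ (Fin (n + 1))) 1)) :
    ∃ z, z ≠ a ∧ z ≠ b := by
  have h2 : 1 < n + 1 := by omega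
  set e0 : EuclideanSpace ℝ (Fin (n+1)) := EuclideanSpace.single ⟨0, by omega⟩ (1:ℝ)
  set e1 : EuclideanSpace ℝ (Fin (n+1)) := EuclideanSpace.single ⟨1, h2⟩ (1:ℝ)
  have hnorm0 : e0 ∈ sphere (0 : EuclideanSpace ℝ (Fin (n+1))) 1 := by
    simp [e0, EuclideanSpace.norm_single]
  have hnorm0' : -e0 ∈ sphere (0 : EuclideanSpace ℝ (Fin (n+1))) 1 := by
    simp [e0, EuclideanSpace.norm_single]
  have hnorm1 : e1 ∈ sphere (0 : EuclideanSpace ℝ (Fin (n+1))) 1 := by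
    simp [e1, EuclideanSpace.norm_single]
  set z0 : (sphere (0 : EuclideanSpace ℝ (Fin (n+1))) 1) := ⟨e0, hnorm0⟩
  set z1 : (sphere (0 : EuclideanSpace ℝ (Fin (n+1))) 1) := ⟨-e0, hnorm0'⟩
  set z2 : (sphere (0 : EuclideanSpace ℝ (Fin (n+1))) 1) := ⟨e1, hnorm1⟩
  have h01 : z0 ≠ z1 := by
    simp only [z0, z1, ne_eq, Subtype.mk.injEq]
    intro h
    have := congrArg (fun v : EuclideanSpace ℝ (Fin (n+1)) => v ⟨0, by omega⟩) h
    simp [e0, EuclideanSpace.single_apply] at this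
    norm_num at this
  have h02 : z0 ≠ z2 := by
    simp only [z0, z2, ne_eq, Subtype.mk.injEq]
    intro h
    have := congrArg (fun v : EuclideanSpace ℝ (Fin (n+1)) => v ⟨0, by omega⟩) h
    have hne : (⟨0, by omega⟩ : Fin (n+1)) ≠ ⟨1, h2⟩ := by simp [Fin.ext_iff]
    simp [e0, e1, EuclideanSpace.single_apply, hne] at this
  have h12 : z1 ≠ z2 := by
    simp only [z1, z2, ne_eq, Subtype.mk.injEq]
    intro h
    have := congrArg (fun v : EuclideanSpace ℝ (Fin (n+1)) => v ⟨0, by omega⟩) h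
    have hne : (⟨0, by omega⟩ : Fin (n+1)) ≠ ⟨1, h2⟩ := by simp [Fin.ext_iff]
    simp [e0, e1, EuclideanSpace.single_apply, hne] at this
  by_cases h0 : z0 ≠ a ∧ z0 ≠ b
  · exact ⟨z0, h0⟩
  by_cases h1 : z1 ≠ a ∧ z1 ≠ b
  · exact ⟨z1, h1⟩
  push_neg at h0 h1
  have h0d : z0 = a ∨ z0 = b := by
    rcases eq_or_ne z0 a with h|h
    · exact Or.inl h
    · exact Or.inr (h0 h)
  have h1d : z1 = a ∨ z1 = b := by
    rcases eq_or_ne z1 a with h|h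
    · exact Or.inl h
    · exact Or.inr (h1 h)
  refine ⟨z2, fun ha => ?_, fun hb => ?_⟩
  · rcases h0d with h|h
    · exact h02 (h.trans ha.symm)
    · rcases h1d with h'|h'
      · exact h12 (h'.trans ha.symm)
      · exact h01 (h.trans h'.symm)
  · rcases h0d with h|h
    · rcases h1d with h'|h'
      · exact h01 (h.trans h'.symm)
      · exact h12 (h'.trans hb.symm)
    · exact h02 (h.trans hb.symm)


def matchAt {k : ℕ} (ω : ℕ → Fin k) (t0 : ℕ) (w : List (Fin k)) : Prop :=
  ∀ i : Fin w.length, ω (t0 + i) = w.get i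

lemma matchAt_congr_word {k : ℕ} (ω : ℕ → Fin k) (t0 : ℕ) {w₁ w₂ : List (Fin k)}
    (h : w₁ = w₂) : matchAt ω t0 w₁ ↔ matchAt ω t0 w₂ := by subst h; rfl

lemma matchAt_congr_seq {k : ℕ} {ω ω' : ℕ → Fin k} (t0 : ℕ) (w : List (Fin k))
    (h : ∀ i, i < t0 + w.length → ω i = ω' i) : matchAt ω t0 w ↔ matchAt ω' t0 w := by
  unfold matchAt
  exact forall_congr' fun i => by rw [h _ (by omega)]

lemma matchAt_ofFn {k : ℕ} {ω : ℕ → Fin k} {t0 : ℕ} {w : List (Fin k)}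
    (h : matchAt ω t0 w) : List.ofFn (fun i : Fin w.length => ω (t0 + i)) = w := by
  refine List.ext_get (by simp) fun n h1 h2 => ?_
  rw [List.get_ofFn]
  exact h (Fin.cast (by simp) ⟨n, h1⟩)

lemma bad_null {X : Type*} [MetricSpace X] {k : ℕ} (hk : 0 < k)
    (g : Fin k → X → X) (x y : X)
    (μ : Measure (ℕ → Fin k)) [IsProbabilityMeasure μ]
    (pw : Fin k → ℝ≥0∞) (hpos : ∀ i, 0 < pw i) (hsum : ∑ i, pw i = 1)
    (hcyl : ∀ (m : ℕ) (w : Fin m → Fin k),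
      μ {ω | ∀ i : Fin m, ω i = w i} = ∏ i, pw (w i))
    {ε : ℝ} (N₀ : ℕ)
    (hσ : ∀ a b : X, ∃ w : List (Fin k), w.length ≤ N₀ ∧
      dist (applyWord g w a) (applyWord g w b) < ε)
    (M : ℕ) :
    μ {ω | ∀ t, M ≤ t → ε ≤ dist (fIter g ω x t) (fIter g ω y t)} = 0 := by
  classical
  obtain ⟨σ, hσlen, hσdist⟩ :
      ∃ σ : X → X → List (Fin k), (∀ a b, (σ a b).length ≤ N₀) ∧
        (∀ a b, dist (applyWord g (σ a b) a) (applyWord g (σ a b) b) < ε) := by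
    choose σ h1 h2 using hσ
    exact ⟨σ, h1, h2⟩
  set N : ℕ := max N₀ 1 with hNdef
  have hN1 : 1 ≤ N := le_max_right _ _
  have hlen : ∀ a b, (σ a b).length ≤ N := fun a b => (hσlen a b).trans (le_max_left _ _)
  set ρ : ℝ≥0∞ := (∏ j, pw j) ^ N with hρdef
  have hρ0 : ρ ≠ 0 := by
    apply pow_ne_zero
    rw [Finset.prod_ne_zero_iff]
    exact fun i _ => (hpos i).ne'
  have h1ρ : (1 : ℝ≥0∞) - ρ < 1 := ENNReal.sub_lt_self ENNReal.one_ne_top one_ne_zero hρ0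
  set d : Fin k := ⟨0, hk⟩
  let ext : ∀ m : ℕ, (Fin m → Fin k) → (ℕ → Fin k) := fun m u i =>
    if h : i < m then u ⟨i, h⟩ else d
  have hext : ∀ (m : ℕ) (ω : ℕ → Fin k) (i : ℕ), i < m →
      ext m (fun s : Fin m => ω s) i = ω i := by
    intro m ω i hi
    simp only [ext, dif_pos hi]
  -- the word chosen at stage j, as a function of the first (M+j)*N coordinates
  let Wd : ∀ j : ℕ, (Fin ((M + j) * N) → Fin k) → List (Fin k) := fun j u =>
    σ (fIter g (ext _ u) x ((M + j) * N)) (fIter g (ext _ u) y ((M + j) * N))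
  have hWdlen : ∀ j u, (Wd j u).length ≤ N := fun j u => hlen _ _
  -- the matching event at stage j
  let E : ℕ → (ℕ → Fin k) → Prop := fun j ω =>
    matchAt ω ((M + j) * N) (Wd j (fun s => ω s))
  have hWd_congr : ∀ (j : ℕ) (ω ω' : ℕ → Fin k),
      (∀ i, i < (M + j) * N → ω i = ω' i) →
      Wd j (fun s => ω s) = Wd j (fun s => ω' s) := by
    intro j ω ω' hag
    have h1 : (fun s : Fin ((M + j) * N) => ω s) = fun s : Fin ((M + j) * N) => ω' s :=
      funext fun s => hag s s.isLt
    rw [h1]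
  have hE_congr : ∀ (j : ℕ) (ω ω' : ℕ → Fin k),
      (∀ i, i < (M + j + 1) * N → ω i = ω' i) → (E j ω ↔ E j ω') := by
    intro j ω ω' hag
    have hag' : ∀ i, i < (M + j) * N → ω i = ω' i := by
      intro i hi
      exact hag i (hi.trans_le (Nat.mul_le_mul_right N (Nat.le_succ _)))
    have hW := hWd_congr j ω ω' hag'
    calc E j ω ↔ matchAt ω ((M + j) * N) (Wd j (fun s => ω' s)) :=
          matchAt_congr_word ω _ hW
      _ ↔ matchAt ω' ((M + j) * N) (Wd j (fun s => ω' s)) := by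
          refine matchAt_congr_seq _ _ fun i hi => hag i ?_
          have hlw : (Wd j (fun s : Fin ((M + j) * N) => ω' s)).length ≤ N :=
            hWdlen j (fun s : Fin ((M + j) * N) => ω' s)
          have heq : (M + j) * N + N = (M + j + 1) * N := by ring
          omega
      _ ↔ E j ω' := Iff.rfl
  -- if E j holds then the pair is ε-close at some time ≥ M
  have hEclose : ∀ (j : ℕ) (ω : ℕ → Fin k), E j ω →
      ∃ t, M ≤ t ∧ dist (fIter g ω x t) (fIter g ω y t) < ε := by
    intro j ω hE
    set t0 := (M + j) * N with ht0
    set a := fIter g ω x t0 with ha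
    set b := fIter g ω y t0 with hb
    have hxa : fIter g (ext t0 (fun s : Fin t0 => ω s)) x t0 = a :=
      fIter_congr g _ ω x t0 (fun i hi => hext t0 ω i hi)
    have hxb : fIter g (ext t0 (fun s : Fin t0 => ω s)) y t0 = b :=
      fIter_congr g _ ω y t0 (fun i hi => hext t0 ω i hi)
    have hword : Wd j (fun s : Fin t0 => ω s) = σ a b := by
      show σ _ _ = σ a b
      rw [hxa, hxb]
    have hmm : matchAt ω t0 (σ a b) := (matchAt_congr_word ω t0 hword).mp hE
    have hofn : List.ofFn (fun i : Fin (σ a b).length => ω (t0 + i)) = σ a b :=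
      matchAt_ofFn hmm
    refine ⟨t0 + (σ a b).length, le_trans ?_ (Nat.le_add_right _ _), ?_⟩
    · calc M ≤ M + j := Nat.le_add_right _ _
        _ ≤ (M + j) * N := Nat.le_mul_of_pos_right _ hN1
    · rw [fIter_add, fIter_add, hofn, ← ha, ← hb]
      exact hσdist a b
  -- the decreasing family of bad events
  let D : ℕ → Set (ℕ → Fin k) := fun J => {ω | ∀ j, j ≤ J → ¬ E j ω}
  have hBadD : ∀ J, {ω | ∀ t, M ≤ t → ε ≤ dist (fIter g ω x t) (fIter g ω y t)} ⊆ D J := by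
    intro J ω hω j _ hE
    obtain ⟨t, hMt, hlt⟩ := hEclose j ω hE
    exact absurd (hω t hMt) (not_le.mpr hlt)
  -- the key inductive bound
  have hDbound : ∀ J, μ (D J) ≤ (1 - ρ) ^ (J + 1) := by
    intro J
    induction J with
    | zero =>
      have h0 : D 0 = {ω : ℕ → Fin k |
          (fun _ : Fin (M * N) → Fin k => True) (fun i : Fin (M * N) => ω i) ∧
          ¬ (∀ i : Fin ((Wd 0) (fun i : Fin (M * N) => ω i)).length,
              ω (M * N + i) = ((Wd 0) (fun i : Fin (M * N) => ω i)).get i)} := by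
        ext ω
        simp only [D, Set.mem_setOf_eq, true_and]
        constructor
        · intro h
          exact h 0 le_rfl
        · intro h j hj
          have : j = 0 := by omega
          subst this
          exact h
      rw [h0]
      refine le_trans (cond_step μ pw hcyl hsum (M * N) N (fun _ => True) (Wd 0)
        (fun u => hWdlen 0 u)) ?_
      have h1 : {ω : ℕ → Fin k |
          (fun _ : Fin (M * N) → Fin k => True) (fun i : Fin (M * N) => ω i)} = Set.univ := by
        ext; simp
      rw [h1, measure_univ, mul_one, pow_one, hρdef]
    | succ J ih =>
      set m1 : ℕ := (M + J + 1) * N with hm1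
      obtain ⟨P, hP⟩ : ∃ P : (Fin m1 → Fin k) → Prop,
          P = fun u => ∀ j, j ≤ J → ¬ E j (ext m1 u) := ⟨_, rfl⟩
      have hagree : ∀ (ω : ℕ → Fin k) (j : ℕ), j ≤ J →
          ∀ i, i < (M + j + 1) * N → ext m1 (fun s : Fin m1 => ω s) i = ω i := by
        intro ω j hj i hi
        refine hext m1 ω i (hi.trans_le (Nat.mul_le_mul_right N (by omega)))
      have hDJ : D J = {ω : ℕ → Fin k | P (fun i : Fin m1 => ω i)} := by
        ext ω
        simp only [D, Set.mem_setOf_eq, hP]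
        constructor
        · intro h j hj
          rw [hE_congr j (ext m1 (fun s : Fin m1 => ω s)) ω (fun i hi => hagree ω j hj i hi)]
          exact h j hj
        · intro h j hj
          rw [← hE_congr j (ext m1 (fun s : Fin m1 => ω s)) ω (fun i hi => hagree ω j hj i hi)]
          exact h j hj
      have hDJ1 : D (J + 1) = {ω : ℕ → Fin k | P (fun i : Fin m1 => ω i) ∧
          ¬ (∀ i : Fin ((Wd (J+1)) (fun i : Fin m1 => ω i)).length,
              ω (m1 + i) = ((Wd (J+1)) (fun i : Fin m1 => ω i)).get i)} := by
        ext ω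
        simp only [D, Set.mem_setOf_eq]
        constructor
        · intro h
          refine ⟨?_, ?_⟩
          · have : ω ∈ D J := fun j hj => h j (hj.trans (Nat.le_succ _))
            rw [hDJ] at this
            exact this
          · exact h (J + 1) le_rfl
        · rintro ⟨h1, h2⟩ j hj
          rcases Nat.lt_or_ge j (J + 1) with hlt | hge
          · have : ω ∈ D J := by rw [hDJ]; exact h1
            exact this j (by omega)
          · have hj1 : j = J + 1 := le_antisymm hj hge
            subst hj1
            exact h2
      rw [hDJ1]
      refine le_trans (cond_step μ pw hcyl hsum m1 N P (Wd (J+1))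
        (fun u => hWdlen (J+1) u)) ?_
      rw [← hρdef, ← hDJ]
      calc (1 - ρ) * μ (D J) ≤ (1 - ρ) * (1 - ρ) ^ (J + 1) := mul_le_mul_right ih _
        _ = (1 - ρ) ^ (J + 1 + 1) := by ring
  -- conclude
  have htend : Filter.Tendsto (fun J : ℕ => (1 - ρ) ^ (J + 1)) Filter.atTop (nhds 0) :=
    (ENNReal.tendsto_pow_atTop_nhds_zero_of_lt_one h1ρ).comp (Filter.tendsto_add_atTop_nat 1)
  have hle : μ {ω | ∀ t, M ≤ t → ε ≤ dist (fIter g ω x t) (fIter g ω y t)} ≤ 0 :=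
    ge_of_tendsto htend (Filter.Eventually.of_forall fun J =>
      le_trans (measure_mono (hBadD J)) (hDbound J))
  exact le_antisymm hle zero_le

theorem stmt12 {n : ℕ} (hn : 1 ≤ n) {k : ℕ}
    (f : Fin k → (sphere (0 : EuclideanSpace ℝ (Fin (n + 1))) 1) ≃ₜ
                 (sphere (0 : EuclideanSpace ℝ (Fin (n + 1))) 1))
    -- backward minimality
    (hbmin : ∀ x, Dense {y | ∃ w : List (Fin k), w ≠ [] ∧ y = applyInvWord f w x})
    -- a north-south homeomorphism ϕ in the generated semigroup
    (ϕ : (sphere (0 : EuclideanSpace ℝ (Fin (n + 1))) 1) ≃ₜ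
         (sphere (0 : EuclideanSpace ℝ (Fin (n + 1))) 1))
    (hϕmem : ∃ w : List (Fin k), w ≠ [] ∧ ∀ x, ϕ x = applyWord (fun i => ⇑(f i)) w x)
    (p q : sphere (0 : EuclideanSpace ℝ (Fin (n + 1))) 1) (hpq : p ≠ q)
    (hp : ϕ p = p) (hq : ϕ q = q)
    (hfix : ∀ x, ϕ x = x → x = p ∨ x = q)
    (huniform : ∀ W : Set (sphere (0 : EuclideanSpace ℝ (Fin (n + 1))) 1),
      IsOpen W → q ∈ W →
      TendstoUniformlyOn (fun ℓ x => (⇑ϕ)^[ℓ] x) (fun _ => p) Filter.atTop Wᶜ)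
    -- Bernoulli measure
    (μ : Measure (ℕ → Fin k)) [IsProbabilityMeasure μ]
    (pw : Fin k → ℝ≥0∞) (hpos : ∀ i, 0 < pw i) (hsum : ∑ i, pw i = 1)
    (hcyl : ∀ (m : ℕ) (w : Fin m → Fin k),
      μ {ω | ∀ i : Fin m, ω i = w i} = ∏ i, pw (w i)) :
    ∀ x y, ∀ᵐ ω ∂μ,
      Filter.atTop.liminf
        (fun i => dist (fIter (fun j => ⇑(f j)) ω x i)
                       (fIter (fun j => ⇑(f j)) ω y i)) = 0 := by
  classical
  have hk : 0 < k := by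
    rcases Nat.eq_zero_or_pos k with h | h
    · subst h
      simp at hsum
    · exact h
  obtain ⟨w0, _hw0ne, hw0⟩ := hϕmem
  have hthird : ∀ a b : (sphere (0 : EuclideanSpace ℝ (Fin (n + 1))) 1),
      ∃ z, z ≠ a ∧ z ≠ b := fun a b => third_point hn a b
  intro x y
  have hdistle : ∀ a b : (sphere (0 : EuclideanSpace ℝ (Fin (n + 1))) 1), dist a b ≤ 2 := by
    intro a b
    have ha : dist (a : EuclideanSpace ℝ (Fin (n + 1))) 0 = 1 := mem_sphere.mp a.2
    have hb : dist (b : EuclideanSpace ℝ (Fin (n + 1))) 0 = 1 := mem_sphere.mp b.2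
    rw [Subtype.dist_eq]
    calc dist (a : EuclideanSpace ℝ (Fin (n + 1))) (b : EuclideanSpace ℝ (Fin (n + 1)))
        ≤ dist (a : EuclideanSpace ℝ (Fin (n + 1))) 0
          + dist (b : EuclideanSpace ℝ (Fin (n + 1))) 0 := dist_triangle_right _ _ _
      _ = 2 := by rw [ha, hb]; norm_num
  have hnull : ∀ (j M : ℕ), μ {ω | ∀ t, M ≤ t →
      1 / ((j : ℝ) + 1) ≤ dist (fIter (fun j => ⇑(f j)) ω x t) (fIter (fun j => ⇑(f j)) ω y t)}
      = 0 := by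
    intro j M
    have hε : (0 : ℝ) < 1 / ((j : ℝ) + 1) := by positivity
    obtain ⟨N₀, hN₀⟩ := uniform_contraction f q (hbmin q) hthird ϕ p huniform w0 hw0 hε
    exact bad_null hk (fun j => ⇑(f j)) x y μ pw hpos hsum hcyl N₀ hN₀ M
  rw [ae_iff]
  refine measure_mono_null ?_
    (measure_iUnion_null fun j : ℕ => measure_iUnion_null fun M : ℕ => hnull j M)
  intro ω hω
  simp only [Set.mem_setOf_eq] at hω
  set L : ℕ → ℝ := fun t =>
    dist (fIter (fun j => ⇑(f j)) ω x t) (fIter (fun j => ⇑(f j)) ω y t) with hL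
  have hL0 : ∀ t, 0 ≤ L t := fun t => dist_nonneg
  have hL2 : ∀ t, L t ≤ 2 := fun t => hdistle _ _
  have hbdd : Filter.IsBoundedUnder (· ≤ ·) Filter.atTop L :=
    Filter.isBoundedUnder_of ⟨2, fun t => hL2 t⟩
  have hbddge : Filter.IsBoundedUnder (· ≥ ·) Filter.atTop L :=
    Filter.isBoundedUnder_of ⟨0, fun t => hL0 t⟩
  have hcobdd : Filter.IsCoboundedUnder (· ≥ ·) Filter.atTop L :=
    hbdd.isCoboundedUnder_ge
  have h0le : 0 ≤ Filter.liminf L Filter.atTop :=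
    Filter.le_liminf_of_le hcobdd (Filter.Eventually.of_forall hL0)
  have hposlim : 0 < Filter.liminf L Filter.atTop := h0le.lt_of_ne (Ne.symm hω)
  obtain ⟨j, hj⟩ := exists_nat_gt (1 / Filter.liminf L Filter.atTop)
  have hjc : 1 / ((j : ℝ) + 1) < Filter.liminf L Filter.atTop := by
    have h1 : 1 / Filter.liminf L Filter.atTop < (j : ℝ) + 1 := hj.trans (lt_add_one _)
    rw [div_lt_iff₀ hposlim] at h1
    rw [div_lt_iff₀ (by positivity)]
    linarith
  have hev := Filter.eventually_lt_of_lt_liminf hjc hbddge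
  rw [Filter.eventually_atTop] at hev
  obtain ⟨M, hM⟩ := hev
  exact Set.mem_iUnion.mpr ⟨j, Set.mem_iUnion.mpr ⟨M, fun t ht => (hM t ht).le⟩⟩
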